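/- Let A be a co-hereditary graph property (the complement of a hereditary property, i.e., if G ∈ A and G is an induced subgraph of H, then H ∈ A). Let G be a graph on n vertices and let c_k denote the number of vertex subsets S of size k with G[S] ∈ A. Then for all k with 0 ≤ k < n/2, c_k ≤ c_{k+1}. -/

import Mathlib

open Finset

def embOfSubset {V : Type} (G : SimpleGraph V) {S T : Set V} (h : S ⊆ T) :
    G.induce S ↪g G.induce T where
  toFun := Set.inclusion h
  inj' := Set.inclusion_injective h
  map_rel_iff' := Iff.rfl

/-- For a co-hereditary graph property `A` (closed under taking
graphs in which a member embeds as an induced subgraph) and a graph `G` on `n`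
vertices, with `c k` the number of `k`-subsets `S` with `G[S] ∈ A`, we have
`c k ≤ c (k+1)` for all `k < n/2`. -/
theorem stmt_0 {V : Type} [Fintype V] (G : SimpleGraph V)
    (A : ∀ ⦃α : Type⦄, SimpleGraph α → Prop)
    (hA : ∀ ⦃α β : Type⦄ (H : SimpleGraph α) (H' : SimpleGraph β),
      Nonempty (H ↪g H') → A H → A H')
    (c : ℕ → ℕ)
    (hc : ∀ k, c k = Nat.card {S : Finset V // S.card = k ∧ A (G.induce (S : Set V))})
    (k : ℕ) (hk : 2 * k < Fintype.card V) :
    c k ≤ c (k + 1) := by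
  classical
  set n := Fintype.card V with hn
  set s : Finset (Finset V) :=
    Finset.univ.filter (fun S => S.card = k ∧ A (G.induce (S : Set V))) with hs
  set t : Finset (Finset V) :=
    Finset.univ.filter (fun S => S.card = k + 1 ∧ A (G.induce (S : Set V))) with ht
  have hcs : c k = s.card := by
    rw [hc, Nat.card_eq_fintype_card, Fintype.card_subtype]
  have hct : c (k + 1) = t.card := by
    rw [hc, Nat.card_eq_fintype_card, Fintype.card_subtype]
  have key : s.card * (n - k) ≤ t.card * (k + 1) := by
    apply Finset.card_mul_le_card_mul (fun S T => S ⊆ T)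
    · intro S hS
      rw [hs, mem_filter] at hS
      obtain ⟨-, hSk, hSA⟩ := hS
      have : (Sᶜ : Finset V).card ≤ (t.bipartiteAbove (fun S T => S ⊆ T) S).card := by
        apply Finset.card_le_card_of_injOn (fun v => insert v S)
        · intro v hv
          rw [mem_coe, mem_compl] at hv
          rw [mem_coe, Finset.bipartiteAbove, mem_filter, ht, mem_filter]
          refine ⟨⟨mem_univ _, ?_, ?_⟩, subset_insert _ _⟩
          · rw [card_insert_of_notMem hv, hSk]
          · exact hA _ _ ⟨embOfSubset G (by
              intro x hx
              simp only [Finset.coe_insert, Set.mem_insert_iff]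
              exact Or.inr hx)⟩ hSA
        · intro v hv w hw hvw
          rw [mem_coe, mem_compl] at hv hw
          have hvw' : insert v S = insert w S := hvw
          have : v ∈ insert w S := by rw [← hvw']; exact mem_insert_self v S
          rcases mem_insert.1 this with h | h
          · exact h
          · exact absurd h hv
      calc n - k = (Sᶜ : Finset V).card := by rw [card_compl, hSk]
        _ ≤ _ := this
    · intro T hT
      rw [ht, mem_filter] at hT
      obtain ⟨-, hTk, -⟩ := hT
      have hsub : s.bipartiteBelow (fun S T => S ⊆ T) T ⊆ T.powersetCard k := by
        intro S hS
        rw [Finset.bipartiteBelow, mem_filter, hs, mem_filter] at hS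
        exact mem_powersetCard.2 ⟨hS.2, hS.1.2.1⟩
      calc (s.bipartiteBelow (fun S T => S ⊆ T) T).card
          ≤ (T.powersetCard k).card := card_le_card hsub
        _ = (k + 1).choose k := by rw [card_powersetCard, hTk]
        _ = k + 1 := Nat.choose_succ_self_right k
  have hle : k + 1 ≤ n - k := by omega
  rw [hcs, hct]
  have : s.card * (k + 1) ≤ t.card * (k + 1) :=
    le_trans (Nat.mul_le_mul_left _ hle) key
  exact Nat.le_of_mul_le_mul_right this (Nat.succ_pos k)
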